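/- Let c ≥ 1, b ∈ ℝ, and α ≥ 12. Define ξ(x) = α/(x-b)² for x < b. Then for all s ≥ 0 and x < b: −(1/2)ξ''(x) + (1/4)ξ(x)² − c(c e^{-cs}∫₀ˢ e^{cs'} ds' · ξ(x) − ξ(x)) ≥ 0. -/

import Mathlib

open Real MeasureTheory intervalIntegral

lemma xi_deriv (b α : ℝ) (ξ : ℝ → ℝ) (hξ : ∀ x, ξ x = α / (x - b) ^ 2) :
    ∀ y : ℝ, y ≠ b → deriv ξ y = -2 * α / (y - b) ^ 3 := by
  intro y hy
  have hyb : y - b ≠ 0 := sub_ne_zero.mpr hy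
  have h : HasDerivAt ξ (-2 * α / (y - b) ^ 3) y := by
    have h1 : HasDerivAt (fun x : ℝ => (x - b) ^ 2) (2 * (y - b)) y := by
      have := ((hasDerivAt_id y).sub_const b).pow 2
      simpa [Pi.pow_def] using this
    have h2 : HasDerivAt (fun x : ℝ => α / (x - b) ^ 2)
        ((0 * (y - b) ^ 2 - α * (2 * (y - b))) / ((y - b) ^ 2) ^ 2) y :=
      (hasDerivAt_const y α).div h1 (pow_ne_zero 2 hyb)
    have heq : (0 * (y - b) ^ 2 - α * (2 * (y - b))) / ((y - b) ^ 2) ^ 2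
        = -2 * α / (y - b) ^ 3 := by field_simp; ring
    rw [heq] at h2
    exact h2.congr_of_eventuallyEq (Filter.Eventually.of_forall fun x => hξ x)
  exact h.deriv

theorem xi_is_supersolution (c b α : ℝ) (hc : 1 ≤ c) (hα : 12 ≤ α)
    (ξ : ℝ → ℝ) (hξ : ∀ x, ξ x = α / (x - b) ^ 2) :
    ∀ s ≥ (0:ℝ), ∀ x < b,
      0 ≤ -(1 / 2) * deriv (deriv ξ) x + (1 / 4) * (ξ x) ^ 2 -
        c * (c * Real.exp (-c * s) * (∫ s' in (0:ℝ)..s, Real.exp (c * s')) * ξ x - ξ x) := by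
  intro s hs x hx
  have hc0 : c ≠ 0 := by positivity
  have hxb : x - b ≠ 0 := sub_ne_zero.mpr hx.ne
  -- second derivative
  have hdd : deriv (deriv ξ) x = 6 * α / (x - b) ^ 4 := by
    have hev : deriv ξ =ᶠ[nhds x] (fun y => -2 * α / (y - b) ^ 3) := by
      have : {y : ℝ | y ≠ b} ∈ nhds x := isOpen_ne.mem_nhds hx.ne
      filter_upwards [this] with y hy
      exact xi_deriv b α ξ hξ y hy
    rw [Filter.EventuallyEq.deriv_eq hev]
    have h1 : HasDerivAt (fun x : ℝ => (x - b) ^ 3) (3 * (x - b) ^ 2) x := by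
      have := ((hasDerivAt_id x).sub_const b).pow 3
      simpa [Pi.pow_def] using this
    have h2 : HasDerivAt (fun y : ℝ => -2 * α / (y - b) ^ 3)
        ((0 * (x - b) ^ 3 - (-2 * α) * (3 * (x - b) ^ 2)) / ((x - b) ^ 3) ^ 2) x :=
      (hasDerivAt_const x (-2 * α)).div h1 (pow_ne_zero 3 hxb)
    rw [h2.deriv]
    field_simp
    ring
  -- integral
  have hint : (∫ s' in (0:ℝ)..s, Real.exp (c * s')) = (Real.exp (c * s) - 1) / c := by
    rw [intervalIntegral.integral_comp_mul_left _ hc0, integral_exp]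
    simp [smul_eq_mul]
    field_simp
  rw [hdd, hξ x, hint]
  have hkey : c * (c * Real.exp (-c * s) * ((Real.exp (c * s) - 1) / c)) = c * (1 - Real.exp (-c * s)) := by
    have hprod : Real.exp (-(c * s)) * Real.exp (c * s) = 1 := by
      rw [← Real.exp_add]; simp
    field_simp
    linear_combination hprod
  have hE : (0:ℝ) < Real.exp (-c * s) := Real.exp_pos _
  have h4 : (0:ℝ) < (x - b) ^ 2 := by positivity
  have expand : -(1 / 2) * (6 * α / (x - b) ^ 4) + 1 / 4 * (α / (x - b) ^ 2) ^ 2 -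
      c * (c * Real.exp (-c * s) * ((Real.exp (c * s) - 1) / c) * (α / (x - b) ^ 2) - α / (x - b) ^ 2)
      = α * (α - 12) / (4 * (x - b) ^ 4) + c * Real.exp (-c * s) * α / (x - b) ^ 2 := by
    have : c * (c * Real.exp (-c * s) * ((Real.exp (c * s) - 1) / c) * (α / (x - b) ^ 2) - α / (x - b) ^ 2)
        = -(c * Real.exp (-c * s) * α / (x - b) ^ 2) := by
      have hprod : Real.exp (-(c * s)) * Real.exp (c * s) = 1 := by
        rw [← Real.exp_add]; simp
      field_simp
      linear_combination hprod
    rw [this]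
    field_simp
    ring
  rw [expand]
  have hα0 : (0:ℝ) ≤ α := by linarith
  have h1 : (0:ℝ) ≤ α * (α - 12) / (4 * (x - b) ^ 4) := by
    apply div_nonneg
    · nlinarith
    · positivity
  have h2 : (0:ℝ) ≤ c * Real.exp (-c * s) * α / (x - b) ^ 2 := by positivity
  linarith
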